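/- Let M be a submonoid of the additive monoid ℚ₊ of nonnegative rational numbers. Then M is a Prüfer monoid if and only if M is difference-closed. -/
import Mathlib

/-- `M` is difference-closed: for any `a, b ∈ M` with `b ≤ a`, `a - b ∈ M`. -/
def DifferenceClosed (M : AddSubmonoid ℚ) : Prop :=
  ∀ a ∈ M, ∀ b ∈ M, b ≤ a → a - b ∈ M

/-- `M` is a Prüfer monoid: it is the union of an increasing sequence of cyclic
submonoids `⟨qₙ⟩` with `qₙ ∈ ℚ₊`. -/
def IsPruferMonoid (M : AddSubmonoid ℚ) : Prop :=
  ∃ q : ℕ → ℚ, (∀ n, 0 ≤ q n) ∧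
    (∀ n, AddSubmonoid.closure {q n} ≤ AddSubmonoid.closure {q (n + 1)}) ∧
    (M : Set ℚ) = ⋃ n, (AddSubmonoid.closure {q n} : Set ℚ)

/-- Euclidean-algorithm step lemma: two elements of a difference-closed monoid with
a common denominator lie in a common cyclic submonoid generated in `M`. -/
lemma euclid_key (M : AddSubmonoid ℚ) (hd : DifferenceClosed M) :
    ∀ N p r : ℕ, p + r ≤ N → ∀ d : ℚ, 0 < d →
      (p : ℚ) / d ∈ M → (r : ℚ) / d ∈ M →
      ∃ g ∈ M, (p : ℚ) / d ∈ AddSubmonoid.closure {g} ∧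
        (r : ℚ) / d ∈ AddSubmonoid.closure {g} := by
  intro N
  induction N with
  | zero =>
    intro p r h d hdpos hp hr
    have hp0 : p = 0 := by omega
    have hr0 : r = 0 := by omega
    subst hp0; subst hr0
    refine ⟨0, M.zero_mem, ?_, ?_⟩ <;>
      · rw [Nat.cast_zero, zero_div]; exact zero_mem _
  | succ N ih =>
    intro p r h d hdpos hp hr
    rcases Nat.eq_zero_or_pos r with hr0 | hrpos
    · subst hr0
      refine ⟨(p : ℚ) / d, hp, ?_, ?_⟩
      · exact AddSubmonoid.mem_closure_singleton.2 ⟨1, one_nsmul _⟩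
      · simpa using (AddSubmonoid.closure {(p : ℚ) / d}).zero_mem
    rcases Nat.eq_zero_or_pos p with hp0 | hppos
    · subst hp0
      refine ⟨(r : ℚ) / d, hr, ?_, ?_⟩
      · simpa using (AddSubmonoid.closure {(r : ℚ) / d}).zero_mem
      · exact AddSubmonoid.mem_closure_singleton.2 ⟨1, one_nsmul _⟩
    by_cases hle : r ≤ p
    · have hsub : ((p - r : ℕ) : ℚ) / d ∈ M := by
        have : ((p - r : ℕ) : ℚ) / d = (p : ℚ) / d - (r : ℚ) / d := by
          rw [Nat.cast_sub hle]; ring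
        rw [this]
        exact hd _ hp _ hr (by
          apply div_le_div_of_nonneg_right ?_ hdpos.le
          exact_mod_cast hle)
      obtain ⟨g, hg, h1, h2⟩ := ih (p - r) r (by omega) d hdpos hsub hr
      refine ⟨g, hg, ?_, h2⟩
      have : (p : ℚ) / d = ((p - r : ℕ) : ℚ) / d + (r : ℚ) / d := by
        rw [Nat.cast_sub hle]; ring
      rw [this]
      exact (AddSubmonoid.closure {g}).add_mem h1 h2
    · push_neg at hle
      have hle' : p ≤ r := hle.le
      have hsub : ((r - p : ℕ) : ℚ) / d ∈ M := by
        have : ((r - p : ℕ) : ℚ) / d = (r : ℚ) / d - (p : ℚ) / d := by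
          rw [Nat.cast_sub hle']; ring
        rw [this]
        exact hd _ hr _ hp (by
          apply div_le_div_of_nonneg_right ?_ hdpos.le
          exact_mod_cast hle')
      obtain ⟨g, hg, h1, h2⟩ := ih (r - p) p (by omega) d hdpos hsub hp
      refine ⟨g, hg, h2, ?_⟩
      have : (r : ℚ) / d = ((r - p : ℕ) : ℚ) / d + (p : ℚ) / d := by
        rw [Nat.cast_sub hle']; ring
      rw [this]
      exact (AddSubmonoid.closure {g}).add_mem h1 h2

/-- Any two elements of a difference-closed nonnegative monoid lie in a common
cyclic submonoid generated by an element of `M`. -/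
lemma common_gen (M : AddSubmonoid ℚ) (hM : ∀ x ∈ M, (0 : ℚ) ≤ x)
    (hd : DifferenceClosed M) (a b : ℚ) (ha : a ∈ M) (hb : b ∈ M) :
    ∃ g ∈ M, a ∈ AddSubmonoid.closure {g} ∧ b ∈ AddSubmonoid.closure {g} := by
  have ha0 : 0 ≤ a := hM a ha
  have hb0 : 0 ≤ b := hM b hb
  have hdpos : (0 : ℚ) < (a.den : ℚ) * (b.den : ℚ) := by positivity
  have hap : ((a.num.toNat * b.den : ℕ) : ℚ) / ((a.den : ℚ) * (b.den : ℚ)) = a := by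
    rw [div_eq_iff (ne_of_gt hdpos)]
    have h1 : ((a.num.toNat : ℕ) : ℚ) = ((a.num : ℤ) : ℚ) := by
      exact_mod_cast Int.toNat_of_nonneg (Rat.num_nonneg.2 ha0)
    push_cast
    rw [h1, ← Rat.mul_den_eq_num a]
    ring
  have hbr : ((b.num.toNat * a.den : ℕ) : ℚ) / ((a.den : ℚ) * (b.den : ℚ)) = b := by
    rw [div_eq_iff (ne_of_gt hdpos)]
    have h1 : ((b.num.toNat : ℕ) : ℚ) = ((b.num : ℤ) : ℚ) := by
      exact_mod_cast Int.toNat_of_nonneg (Rat.num_nonneg.2 hb0)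
    push_cast
    rw [h1, ← Rat.mul_den_eq_num b]
    ring
  obtain ⟨g, hg, h1, h2⟩ := euclid_key M hd (a.num.toNat * b.den + b.num.toNat * a.den)
    (a.num.toNat * b.den) (b.num.toNat * a.den) le_rfl ((a.den : ℚ) * (b.den : ℚ)) hdpos
    (by rw [hap]; exact ha) (by rw [hbr]; exact hb)
  exact ⟨g, hg, by rwa [hap] at h1, by rwa [hbr] at h2⟩

theorem prufer_iff_differenceClosed (M : AddSubmonoid ℚ)
    (hM : ∀ x ∈ M, (0 : ℚ) ≤ x) :
    IsPruferMonoid M ↔ DifferenceClosed M := by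
  constructor
  · rintro ⟨q, hq0, hmono, hM_eq⟩ a ha b hb hba
    have hmono' : Monotone fun n => AddSubmonoid.closure {q n} :=
      monotone_nat_of_le_succ hmono
    have hmem : ∀ x ∈ M, ∃ n, x ∈ AddSubmonoid.closure {q n} := by
      intro x hx
      have : x ∈ (M : Set ℚ) := hx
      rw [hM_eq] at this
      simpa using this
    obtain ⟨n, hn⟩ := hmem a ha
    obtain ⟨m, hm⟩ := hmem b hb
    set k := max n m
    have hak : a ∈ AddSubmonoid.closure {q k} := hmono' (le_max_left n m) hn
    have hbk : b ∈ AddSubmonoid.closure {q k} := hmono' (le_max_right n m) hm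
    obtain ⟨i, hi⟩ := AddSubmonoid.mem_closure_singleton.1 hak
    obtain ⟨j, hj⟩ := AddSubmonoid.mem_closure_singleton.1 hbk
    have hsubM : a - b ∈ AddSubmonoid.closure {q k} → a - b ∈ M := by
      intro h
      have : a - b ∈ (M : Set ℚ) := by
        rw [hM_eq]
        exact Set.mem_iUnion.2 ⟨k, h⟩
      exact this
    rcases eq_or_lt_of_le (hq0 k) with hq | hq
    · have ha0 : a = 0 := by rw [← hi, ← hq, smul_zero]
      have hb0 : b = 0 := by rw [← hj, ← hq, smul_zero]
      rw [ha0, hb0, sub_zero]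
      exact M.zero_mem
    · have hji : j ≤ i := by
        by_contra hc
        push_neg at hc
        have : a < b := by
          rw [← hi, ← hj, nsmul_eq_mul, nsmul_eq_mul]
          exact mul_lt_mul_of_pos_right (by exact_mod_cast hc) hq
        exact absurd hba (not_le.2 this)
      apply hsubM
      refine AddSubmonoid.mem_closure_singleton.2 ⟨i - j, ?_⟩
      rw [← hi, ← hj]
      rw [nsmul_eq_mul, nsmul_eq_mul, nsmul_eq_mul, Nat.cast_sub hji]
      ring
  · intro hd
    obtain ⟨f, hf⟩ := exists_surjective_nat ℚ
    classical
    set e : ℕ → ℚ := fun n => if f n ∈ M then f n else 0 with he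
    have heM : ∀ n, e n ∈ M := by
      intro n
      simp only [he]
      split
      · assumption
      · exact M.zero_mem
    have hesurj : ∀ x ∈ M, ∃ n, e n = x := by
      intro x hx
      obtain ⟨n, hn⟩ := hf x
      exact ⟨n, by simp [he, hn, hx]⟩
    have key : ∀ a ∈ M, ∀ b ∈ M, ∃ g ∈ M,
        a ∈ AddSubmonoid.closure {g} ∧ b ∈ AddSubmonoid.closure {g} :=
      fun a ha b hb => common_gen M hM hd a b ha hb
    -- choose a generator function
    have gen : ∀ (x : ℚ × ℚ), x.1 ∈ M → x.2 ∈ M → {g : ℚ // g ∈ M ∧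
        x.1 ∈ AddSubmonoid.closure {g} ∧ x.2 ∈ AddSubmonoid.closure {g}} := by
      intro x hx1 hx2
      exact ⟨(key x.1 hx1 x.2 hx2).choose, (key x.1 hx1 x.2 hx2).choose_spec⟩
    set G : ℚ → ℚ → ℚ := fun a b =>
      if h : a ∈ M ∧ b ∈ M then (gen (a, b) h.1 h.2).1 else 0 with hG
    have hGspec : ∀ a b, a ∈ M → b ∈ M → G a b ∈ M ∧
        a ∈ AddSubmonoid.closure {G a b} ∧ b ∈ AddSubmonoid.closure {G a b} := by
      intro a b ha hb
      simp only [hG, dif_pos (And.intro ha hb)]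
      exact (gen (a, b) ha hb).2
    set q : ℕ → ℚ := fun n => Nat.rec (e 0) (fun n qn => G qn (e (n + 1))) n with hq
    have hq0 : q 0 = e 0 := rfl
    have hqs : ∀ n, q (n + 1) = G (q n) (e (n + 1)) := fun n => rfl
    have hqM : ∀ n, q n ∈ M := by
      intro n
      induction n with
      | zero => exact heM 0
      | succ n ih =>
        rw [hqs]
        exact (hGspec _ _ ih (heM (n + 1))).1
    have hqmono : ∀ n, q n ∈ AddSubmonoid.closure {q (n + 1)} := by
      intro n
      rw [hqs]
      exact (hGspec _ _ (hqM n) (heM (n + 1))).2.1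
    have heq : ∀ n, e n ∈ AddSubmonoid.closure {q n} := by
      intro n
      cases n with
      | zero => exact AddSubmonoid.mem_closure_singleton.2 ⟨1, one_nsmul _⟩
      | succ n =>
        rw [hqs]
        exact (hGspec _ _ (hqM n) (heM (n + 1))).2.2
    refine ⟨q, fun n => hM _ (hqM n), fun n => ?_, ?_⟩
    · rw [AddSubmonoid.closure_le]
      intro x hx
      rw [Set.mem_singleton_iff] at hx
      subst hx
      exact hqmono n
    · ext x
      simp only [Set.mem_iUnion, SetLike.mem_coe]
      constructor
      · intro hx
        obtain ⟨n, hn⟩ := hesurj x hx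
        exact ⟨n, hn ▸ heq n⟩
      · rintro ⟨n, hn⟩
        have : AddSubmonoid.closure {q n} ≤ M := by
          rw [AddSubmonoid.closure_le]
          simpa using hqM n
        exact this hn
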